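/- Any product (separable coherent) pure two-qubit state σ⊗τ, used in the coherence equality game, together with arbitrary server POVMs, cannot win the game with probability exceeding the optimum achieved by the family (√(1−d_ε)|0⟩+√d_ε|1⟩)⊗|1⟩ under the constraint ⟨11|(σ⊗τ)|11⟩ ≤ d_ε; in particular for d_ε = 0 every product state yields P_win ≤ 1/2 unless it equals a non-coherent basis state achieving the classical bound. -/

import Mathlib

open Matrix Kronecker
open scoped ComplexOrder

noncomputable section

/-- Vacuum projector |0⟩⟨0|. -/
def proj0 : Matrix (Fin 2) (Fin 2) ℂ := !![1, 0; 0, 0]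

/-- One-photon projector |1⟩⟨1|. -/
def proj1 : Matrix (Fin 2) (Fin 2) ℂ := !![0, 0; 0, 1]

/-- Partial trace over Bob's system (Alice's reduced state). -/
def trB (ρ : Matrix (Fin 2 × Fin 2) (Fin 2 × Fin 2) ℂ) : Matrix (Fin 2) (Fin 2) ℂ :=
  fun i j => ∑ k, ρ (i, k) (j, k)

/-- Partial trace over Alice's system (Bob's reduced state). -/
def trA (ρ : Matrix (Fin 2 × Fin 2) (Fin 2 × Fin 2) ℂ) : Matrix (Fin 2) (Fin 2) ℂ :=
  fun i j => ∑ k, ρ (k, i) (k, j)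

/-- State after the blocking stage on inputs x, y. -/
def blocked (ρ : Matrix (Fin 2 × Fin 2) (Fin 2 × Fin 2) ℂ) (x y : Fin 2) :
    Matrix (Fin 2 × Fin 2) (Fin 2 × Fin 2) ℂ :=
  if x = 0 then (if y = 0 then ρ else trB ρ ⊗ₖ proj0)
  else (if y = 0 then proj0 ⊗ₖ trA ρ else proj0 ⊗ₖ proj0)

/-- Winning probability of the coherence equality game. -/
def Pwin (ρ : Matrix (Fin 2 × Fin 2) (Fin 2 × Fin 2) ℂ)
    (A B : Fin 2 → Matrix (Fin 2) (Fin 2) ℂ) : ℝ :=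
  (1/4) * ∑ x : Fin 2, ∑ y : Fin 2, ∑ a : Fin 2, ∑ b : Fin 2,
    if a + b = x + y then (Matrix.trace (blocked ρ x y * (A a ⊗ₖ B b))).re else 0

/-- A binary POVM: positive semidefinite elements summing to the identity. -/
def IsPOVM (A : Fin 2 → Matrix (Fin 2) (Fin 2) ℂ) : Prop :=
  (∀ a, (A a).PosSemidef) ∧ A 0 + A 1 = 1

/-- The family of separable coherent states (√(1−d_ε)|0⟩+√d_ε|1⟩)⊗|1⟩. -/
def sepFamily (dε : ℝ) : Fin 2 × Fin 2 → ℂ :=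
  fun p => (if p.1 = 0 then (Real.sqrt (1 - dε) : ℂ) else (Real.sqrt dε : ℂ)) *
    (if p.2 = 1 then 1 else 0)


/-! ### Auxiliary lemmas -/

lemma psd_vecMulVec (v : Fin 2 → ℂ) : (Matrix.vecMulVec v (star v)).PosSemidef := by
  refine Matrix.PosSemidef.of_dotProduct_mulVec_nonneg ?_ ?_
  · ext i j
    simp [Matrix.conjTranspose_apply, Matrix.vecMulVec_apply, mul_comm]
  · intro x
    have h : dotProduct (star x) ((Matrix.vecMulVec v (star v)) *ᵥ x)
        = star (v ⬝ᵥ star x) * (v ⬝ᵥ star x) := by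
      simp [dotProduct, Matrix.mulVec, Matrix.vecMulVec_apply, Fin.sum_univ_two]
      ring
    rw [h]
    exact star_mul_self_nonneg _

lemma psd_quadform {M : Matrix (Fin 2) (Fin 2) ℂ} (h : M.PosSemidef) (x : Fin 2 → ℂ) :
    0 ≤ ((starRingEnd ℂ) (x 0) * (M 0 0 * x 0 + M 0 1 * x 1)
      + (starRingEnd ℂ) (x 1) * (M 1 0 * x 0 + M 1 1 * x 1)).re := by
  have h2 := h.dotProduct_mulVec_nonneg x
  rw [Complex.le_def] at h2
  have h3 : dotProduct (star x) (M *ᵥ x) = (starRingEnd ℂ) (x 0) * (M 0 0 * x 0 + M 0 1 * x 1)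
      + (starRingEnd ℂ) (x 1) * (M 1 0 * x 0 + M 1 1 * x 1) := by
    simp [dotProduct, Matrix.mulVec, Fin.sum_univ_two]
  rw [h3] at h2
  simpa using h2.1

lemma psd_diag00 {M : Matrix (Fin 2) (Fin 2) ℂ} (h : M.PosSemidef) : 0 ≤ (M 0 0).re := by
  have := psd_quadform h ![1, 0]
  simpa using this

lemma psd_diag11 {M : Matrix (Fin 2) (Fin 2) ℂ} (h : M.PosSemidef) : 0 ≤ (M 1 1).re := by
  have := psd_quadform h ![0, 1]
  simpa using this

lemma herm_diag {M : Matrix (Fin 2) (Fin 2) ℂ} (h : M.IsHermitian) (i : Fin 2) :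
    (M i i).im = 0 := by
  have := congrFun (congrFun h i) i
  simp only [Matrix.conjTranspose_apply, Complex.star_def] at this
  have h2 := congrArg Complex.im this
  simp only [Complex.conj_im] at h2
  linarith

lemma herm_off {M : Matrix (Fin 2) (Fin 2) ℂ} (h : M.IsHermitian) :
    M 1 0 = (starRingEnd ℂ) (M 0 1) := by
  have := congrFun (congrFun h 1) 0
  simpa [Matrix.conjTranspose_apply, Complex.star_def] using this.symm

lemma psd_offdiag {M : Matrix (Fin 2) (Fin 2) ℂ} (h : M.PosSemidef) :
    Complex.normSq (M 0 1) ≤ (M 0 0).re * (M 1 1).re := by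
  have ha0 : 0 ≤ (M 0 0).re := psd_diag00 h
  have hia : (M 0 0).im = 0 := herm_diag h.1 0
  have hib : (M 1 1).im = 0 := herm_diag h.1 1
  have hoff : M 1 0 = (starRingEnd ℂ) (M 0 1) := herm_off h.1
  set a := (M 0 0).re with hadef
  set b := (M 1 1).re with hbdef
  set nz := Complex.normSq (M 0 1) with hnzdef
  have hnz0 : 0 ≤ nz := Complex.normSq_nonneg _
  have key : ∀ t : ℝ, 0 ≤ a*(t^2*nz) - 2*(t*nz) + b := by
    intro t
    have hF := psd_quadform h ![(t:ℂ)*(M 0 1), -1]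
    simp only [Matrix.cons_val_zero, Matrix.cons_val_one, Matrix.head_cons, _root_.map_mul,
      map_neg, _root_.map_one, Complex.conj_ofReal, hoff] at hF
    simp only [Complex.add_re, Complex.mul_re, Complex.mul_im, Complex.add_im, Complex.neg_re,
      Complex.neg_im, Complex.one_re, Complex.one_im, Complex.ofReal_re, Complex.ofReal_im,
      Complex.conj_re, Complex.conj_im, hia, hib] at hF
    simp only [hnzdef, Complex.normSq_apply]
    nlinarith [hF]
  rcases eq_or_lt_of_le ha0 with ha | ha
  · have hab : a*b = 0 := by rw [← ha]; ring
    by_contra hcon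
    push_neg at hcon
    have hnzpos : 0 < nz := by linarith
    have hk := key ((b+1)/(2*nz))
    rw [← ha] at hk
    have h2 : 2*((b+1)/(2*nz)*nz) = b+1 := by field_simp
    nlinarith
  · have hk := key (1/a)
    have h1 : a*((1/a)^2*nz) = nz/a := by field_simp
    have h2 : 2*((1/a)*nz) = 2*(nz/a) := by field_simp
    rw [h1, h2] at hk
    have h3 : nz/a ≤ b := by linarith
    calc nz = (nz/a)*a := by field_simp
    _ ≤ b*a := mul_le_mul_of_nonneg_right h3 (le_of_lt ha)
    _ = a*b := mul_comm _ _

lemma core (a b c s t : ℝ) (ha : 0 ≤ a) (hb : 0 ≤ b) (ha1 : a ≤ 1) (hb1 : b ≤ 1)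
    (ht : 0 ≤ t) (hc : 0 ≤ c) (hs : 0 ≤ s) (hcs : c^2 + s^2 = 1)
    (h1 : t^2 ≤ a*b) (h2 : t^2 ≤ (1-a)*(1-b)) : c*(b-a) + 2*s*t ≤ 1 := by
  set p := Real.sqrt (a*b) with hp
  set q := Real.sqrt ((1-a)*(1-b)) with hq
  have hab : 0 ≤ a*b := mul_nonneg ha hb
  have hab' : 0 ≤ (1-a)*(1-b) := mul_nonneg (by linarith) (by linarith)
  have hp0 : 0 ≤ p := Real.sqrt_nonneg _
  have hq0 : 0 ≤ q := Real.sqrt_nonneg _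
  have hp2 : p^2 = a*b := Real.sq_sqrt hab
  have hq2 : q^2 = (1-a)*(1-b) := Real.sq_sqrt hab'
  have htp : t ≤ p := by nlinarith
  have htq : t ≤ q := by nlinarith
  have hpq2 : (p*q)^2 = (a*(1-a))*(b*(1-b)) := by rw [mul_pow, hp2, hq2]; ring
  have hX : 0 ≤ a*(1-a) := mul_nonneg ha (by linarith)
  have hY : 0 ≤ b*(1-b) := mul_nonneg hb (by linarith)
  have hpq : 2*(p*q) ≤ a*(1-a) + b*(1-b) := by
    nlinarith [hpq2, sq_nonneg (a*(1-a) - b*(1-b)), mul_nonneg hp0 hq0, hX, hY]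
  have key : (b-a)^2 + (p+q)^2 ≤ 1 := by nlinarith
  nlinarith [sq_nonneg (c*(p+q) - s*(b-a)), sq_nonneg (c*(b-a) + s*(p+q) - 1),
    mul_nonneg hs (by linarith : (0:ℝ) ≤ p + q - 2*t), sq_nonneg (c - s)]

lemma Z_expand (u : Fin 2 → ℂ) (A : Matrix (Fin 2) (Fin 2) ℂ) :
    Matrix.trace ((Matrix.vecMulVec u (star u) - proj0) * A)
    = (u 0 * (starRingEnd ℂ) (u 0) - 1) * A 0 0 + u 0 * (starRingEnd ℂ) (u 1) * A 1 0
      + u 1 * (starRingEnd ℂ) (u 0) * A 0 1 + u 1 * (starRingEnd ℂ) (u 1) * A 1 1 := by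
  simp [Matrix.trace, Matrix.mul_apply, Fin.sum_univ_two, Matrix.vecMulVec_apply, proj0,
    Matrix.sub_apply, Complex.star_def]
  ring

lemma Z_re_bound (u : Fin 2 → ℂ) (hu : Complex.normSq (u 0) + Complex.normSq (u 1) = 1)
    (A0 : Matrix (Fin 2) (Fin 2) ℂ) (h0 : A0.PosSemidef) (h1 : (1 - A0).PosSemidef) :
    |(Matrix.trace ((Matrix.vecMulVec u (star u) - proj0) * A0)).re| ≤ ‖u 1‖ := by
  set a := (A0 0 0).re with hadef
  set b := (A0 1 1).re with hbdef
  set z := A0 0 1 with hzdef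
  have hia : (A0 0 0).im = 0 := herm_diag h0.1 0
  have hib : (A0 1 1).im = 0 := herm_diag h0.1 1
  have hoff : A0 1 0 = (starRingEnd ℂ) z := herm_off h0.1
  have ha0 : 0 ≤ a := psd_diag00 h0
  have hb0 : 0 ≤ b := psd_diag11 h0
  have ha1 : a ≤ 1 := by
    have := psd_diag00 h1
    simp [Matrix.sub_apply, Matrix.one_apply] at this
    linarith
  have hb1 : b ≤ 1 := by
    have := psd_diag11 h1
    simp [Matrix.sub_apply, Matrix.one_apply] at this
    linarith
  have hd1 : Complex.normSq z ≤ a * b := psd_offdiag h0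
  have hd2 : Complex.normSq z ≤ (1-a) * (1-b) := by
    have := psd_offdiag h1
    simp [Matrix.sub_apply, Matrix.one_apply] at this
    convert this using 2 <;> simp [Matrix.sub_apply, Matrix.one_apply]
  set c := ‖u 1‖ with hcdef
  set s := ‖u 0‖ with hsdef
  set t := ‖z‖ with htdef
  have hc2 : c^2 = Complex.normSq (u 1) := Complex.sq_norm _
  have hs2 : s^2 = Complex.normSq (u 0) := Complex.sq_norm _
  have ht2 : t^2 = Complex.normSq z := Complex.sq_norm _
  have hcs : c^2 + s^2 = 1 := by rw [hc2, hs2]; linarith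
  have hc0 : 0 ≤ c := norm_nonneg _
  have hs0 : 0 ≤ s := norm_nonneg _
  have ht0 : 0 ≤ t := norm_nonneg _
  have h00 : A0 0 0 = (a:ℂ) := by apply Complex.ext <;> simp [hia, hadef]
  have h11 : A0 1 1 = (b:ℂ) := by apply Complex.ext <;> simp [hib, hbdef]
  set w' := u 0 * (starRingEnd ℂ) (u 1) * (starRingEnd ℂ) z with hwdef
  have hZre : (Matrix.trace ((Matrix.vecMulVec u (star u) - proj0) * A0)).re
      = c^2*(b-a) + 2*w'.re := by
    rw [Z_expand, h00, h11, hoff]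
    have e1 : u 0 * (starRingEnd ℂ) (u 0) = (Complex.normSq (u 0) : ℂ) := Complex.mul_conj _
    have e2 : u 1 * (starRingEnd ℂ) (u 1) = (Complex.normSq (u 1) : ℂ) := Complex.mul_conj _
    have e3 : u 1 * (starRingEnd ℂ) (u 0) * z = (starRingEnd ℂ) w' := by
      rw [hwdef]; simp only [_root_.map_mul, Complex.conj_conj]; ring
    rw [e1, e2, e3]
    have hns1 : Complex.normSq (u 1) = c^2 := hc2.symm
    have hns0 : Complex.normSq (u 0) = 1 - c^2 := by rw [hc2]; linarith
    have e4 : (((Complex.normSq (u 0) : ℂ) - 1) * (a:ℂ)).re = (Complex.normSq (u 0) - 1) * a := by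
      rw [← Complex.ofReal_one, ← Complex.ofReal_sub, ← Complex.ofReal_mul, Complex.ofReal_re]
    have e5 : ((Complex.normSq (u 1) : ℂ) * (b:ℂ)).re = Complex.normSq (u 1) * b := by
      rw [← Complex.ofReal_mul, Complex.ofReal_re]
    simp only [Complex.add_re, Complex.conj_re, e4, e5]
    linear_combination a * hns0 + b * hns1
  have hwab : |w'.re| ≤ s*c*t := by
    have habs : ‖w'‖ = s*c*t := by
      rw [hwdef]; simp [_root_.map_mul, Complex.norm_conj, hsdef, hcdef, htdef]
    rw [← habs]
    exact Complex.abs_re_le_norm _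
  have core1 := core a b c s t ha0 hb0 ha1 hb1 ht0 hc0 hs0 hcs
    (by rw [ht2]; exact hd1) (by rw [ht2]; exact hd2)
  have core2 := core b a c s t hb0 ha0 hb1 ha1 ht0 hc0 hs0 hcs
    (by rw [ht2]; linarith) (by rw [ht2]; linarith)
  rw [hZre, abs_le]
  constructor
  · nlinarith [mul_le_mul_of_nonneg_left core2 hc0, (abs_le.mp hwab).1]
  · nlinarith [mul_le_mul_of_nonneg_left core1 hc0, (abs_le.mp hwab).2]

lemma Z_im (u : Fin 2 → ℂ) (A0 : Matrix (Fin 2) (Fin 2) ℂ) (h : A0.IsHermitian) :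
    (Matrix.trace ((Matrix.vecMulVec u (star u) - proj0) * A0)).im = 0 := by
  rw [Z_expand, herm_off h]
  have h00 := herm_diag h 0
  have h11 := herm_diag h 1
  have e1 : u 0 * (starRingEnd ℂ) (u 0) = (Complex.normSq (u 0) : ℂ) := Complex.mul_conj _
  have e2 : u 1 * (starRingEnd ℂ) (u 1) = (Complex.normSq (u 1) : ℂ) := Complex.mul_conj _
  have e3 : u 1 * (starRingEnd ℂ) (u 0) * (A0 0 1)
      = (starRingEnd ℂ) (u 0 * (starRingEnd ℂ) (u 1) * (starRingEnd ℂ) (A0 0 1)) := by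
    simp only [_root_.map_mul, Complex.conj_conj]; ring
  rw [e1, e2, e3]
  simp only [Complex.add_im, Complex.mul_im, Complex.sub_im, Complex.sub_re, Complex.ofReal_im,
    Complex.ofReal_re, Complex.one_im, Complex.one_re, Complex.conj_im, Complex.conj_re,
    h00, h11]
  ring

lemma trB_kron (M N : Matrix (Fin 2) (Fin 2) ℂ) (hN : N.trace = 1) : trB (M ⊗ₖ N) = M := by
  ext i j
  simp only [trB, Matrix.kroneckerMap_apply]
  rw [← Finset.mul_sum]
  rw [show (∑ k, N k k) = N.trace from rfl, hN, mul_one]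

lemma trA_kron (M N : Matrix (Fin 2) (Fin 2) ℂ) (hM : M.trace = 1) : trA (M ⊗ₖ N) = N := by
  ext i j
  simp only [trA, Matrix.kroneckerMap_apply]
  rw [← Finset.sum_mul]
  rw [show (∑ k, M k k) = M.trace from rfl, hM, one_mul]

lemma trace_vmv (u : Fin 2 → ℂ) (hu : Complex.normSq (u 0) + Complex.normSq (u 1) = 1) :
    (Matrix.vecMulVec u (star u)).trace = 1 := by
  simp only [Matrix.trace, Matrix.diag, Matrix.vecMulVec_apply, Fin.sum_univ_two,
    Pi.star_apply, Complex.star_def, Complex.mul_conj]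
  rw [← Complex.ofReal_add, hu, Complex.ofReal_one]

lemma trace_proj0 : proj0.trace = 1 := by
  simp [proj0, Matrix.trace, Fin.sum_univ_two]

lemma kron_vecMulVec (u w : Fin 2 → ℂ) :
    Matrix.vecMulVec (fun p : Fin 2 × Fin 2 => u p.1 * w p.2)
      (star (fun p : Fin 2 × Fin 2 => u p.1 * w p.2))
    = (Matrix.vecMulVec u (star u)) ⊗ₖ (Matrix.vecMulVec w (star w)) := by
  ext ⟨i, k⟩ ⟨j, l⟩
  simp [Matrix.vecMulVec_apply, Matrix.kroneckerMap_apply, Complex.star_def]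
  ring

lemma Pwin_formula (u w : Fin 2 → ℂ)
    (hu : Complex.normSq (u 0) + Complex.normSq (u 1) = 1)
    (hw : Complex.normSq (w 0) + Complex.normSq (w 1) = 1)
    (A B : Fin 2 → Matrix (Fin 2) (Fin 2) ℂ) (hA : A 0 + A 1 = 1) (hB : B 0 + B 1 = 1) :
    Pwin (Matrix.vecMulVec (fun p : Fin 2 × Fin 2 => u p.1 * w p.2)
      (star (fun p : Fin 2 × Fin 2 => u p.1 * w p.2))) A B
    = 1/2 + ((Matrix.trace ((Matrix.vecMulVec u (star u) - proj0) * A 0))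
        * (Matrix.trace ((Matrix.vecMulVec w (star w) - proj0) * B 0))).re / 2 := by
  set σ := Matrix.vecMulVec u (star u) with hσ
  set τ := Matrix.vecMulVec w (star w) with hτ
  have hσt : σ.trace = 1 := trace_vmv u hu
  have hτt : τ.trace = 1 := trace_vmv w hw
  have hρ := kron_vecMulVec u w
  rw [hρ, ← hσ, ← hτ]
  have hA1 : A 1 = 1 - A 0 := eq_sub_of_add_eq' hA
  have hB1 : B 1 = 1 - B 0 := eq_sub_of_add_eq' hB
  have hblocked00 : blocked (σ ⊗ₖ τ) 0 0 = σ ⊗ₖ τ := by simp [blocked]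
  have hblocked01 : blocked (σ ⊗ₖ τ) 0 1 = σ ⊗ₖ proj0 := by
    simp [blocked, trB_kron σ τ hτt]
  have hblocked10 : blocked (σ ⊗ₖ τ) 1 0 = proj0 ⊗ₖ τ := by
    simp [blocked, trA_kron σ τ hσt]
  have hblocked11 : blocked (σ ⊗ₖ τ) 1 1 = proj0 ⊗ₖ proj0 := by simp [blocked]
  have htr : ∀ (M N P Q : Matrix (Fin 2) (Fin 2) ℂ),
      Matrix.trace ((M ⊗ₖ N) * (P ⊗ₖ Q)) = Matrix.trace (M * P) * Matrix.trace (N * Q) := by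
    intro M N P Q
    rw [← Matrix.mul_kronecker_mul, Matrix.trace_kronecker]
  simp only [Pwin, Fin.sum_univ_two]
  simp only [hblocked00, hblocked01, hblocked10, hblocked11, htr,
    show ((0:Fin 2)+0) = 0 from rfl, show ((0:Fin 2)+1) = 1 from rfl,
    show ((1:Fin 2)+0) = 1 from rfl, show ((1:Fin 2)+1) = 0 by decide,
    show ((0:Fin 2) = 1) = False by simp, show ((1:Fin 2) = 0) = False by simp,
    if_true, if_false, eq_self_iff_true, add_zero, zero_add, Complex.mul_re, Complex.add_re]
  have ta1 : (σ * A 1).trace = 1 - (σ * A 0).trace := by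
    rw [hA1, Matrix.mul_sub, Matrix.mul_one, Matrix.trace_sub, hσt]
  have tb1 : (τ * B 1).trace = 1 - (τ * B 0).trace := by
    rw [hB1, Matrix.mul_sub, Matrix.mul_one, Matrix.trace_sub, hτt]
  have tp1 : (proj0 * A 1).trace = 1 - (proj0 * A 0).trace := by
    rw [hA1, Matrix.mul_sub, Matrix.mul_one, Matrix.trace_sub, trace_proj0]
  have tq1 : (proj0 * B 1).trace = 1 - (proj0 * B 0).trace := by
    rw [hB1, Matrix.mul_sub, Matrix.mul_one, Matrix.trace_sub, trace_proj0]
  have tsA : ((σ - proj0) * A 0).trace = (σ * A 0).trace - (proj0 * A 0).trace := by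
    rw [Matrix.sub_mul, Matrix.trace_sub]
  have tsB : ((τ - proj0) * B 0).trace = (τ * B 0).trace - (proj0 * B 0).trace := by
    rw [Matrix.sub_mul, Matrix.trace_sub]
  rw [ta1, tb1, tp1, tq1, tsA, tsB]
  simp only [Complex.sub_re, Complex.sub_im, Complex.one_re, Complex.one_im]
  ring

lemma Pwin_le_bound (u w : Fin 2 → ℂ)
    (hu : Complex.normSq (u 0) + Complex.normSq (u 1) = 1)
    (hw : Complex.normSq (w 0) + Complex.normSq (w 1) = 1)
    (A B : Fin 2 → Matrix (Fin 2) (Fin 2) ℂ) (hA : IsPOVM A) (hB : IsPOVM B) :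
    Pwin (Matrix.vecMulVec (fun p : Fin 2 × Fin 2 => u p.1 * w p.2)
      (star (fun p : Fin 2 × Fin 2 => u p.1 * w p.2))) A B
    ≤ 1/2 + (‖u 1‖ * ‖w 1‖)/2 := by
  rw [Pwin_formula u w hu hw A B hA.2 hB.2]
  set Zu := Matrix.trace ((Matrix.vecMulVec u (star u) - proj0) * A 0) with hZu
  set Zw := Matrix.trace ((Matrix.vecMulVec w (star w) - proj0) * B 0) with hZw
  have hA1psd : (1 - A 0).PosSemidef := by
    rw [← eq_sub_of_add_eq' hA.2]; exact hA.1 1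
  have hB1psd : (1 - B 0).PosSemidef := by
    rw [← eq_sub_of_add_eq' hB.2]; exact hB.1 1
  have hiu : Zu.im = 0 := Z_im u (A 0) (hA.1 0).1
  have hiw : Zw.im = 0 := Z_im w (B 0) (hB.1 0).1
  have hre : (Zu * Zw).re = Zu.re * Zw.re := by rw [Complex.mul_re, hiu, hiw]; ring
  have h1 := Z_re_bound u hu (A 0) (hA.1 0) hA1psd
  have h2 := Z_re_bound w hw (B 0) (hB.1 0) hB1psd
  rw [hre]
  have h3 : Zu.re * Zw.re ≤ ‖u 1‖ * ‖w 1‖ := by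
    calc Zu.re * Zw.re ≤ |Zu.re * Zw.re| := le_abs_self _
    _ = |Zu.re| * |Zw.re| := abs_mul _ _
    _ ≤ _ := mul_le_mul h1 h2 (abs_nonneg _) (norm_nonneg _)
  linarith

/-- The two tensor factors of the family state. -/
def uFam (dε : ℝ) : Fin 2 → ℂ := ![(Real.sqrt (1 - dε) : ℂ), (Real.sqrt dε : ℂ)]
def wFam : Fin 2 → ℂ := ![0, 1]

lemma sepFamily_eq (dε : ℝ) :
    sepFamily dε = fun p : Fin 2 × Fin 2 => uFam dε p.1 * wFam p.2 := by
  funext p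
  obtain ⟨i, j⟩ := p
  fin_cases i <;> fin_cases j <;> simp [sepFamily, uFam, wFam]

lemma uFam_unit (dε : ℝ) (h0 : 0 ≤ dε) (h1 : dε ≤ 1) :
    Complex.normSq (uFam dε 0) + Complex.normSq (uFam dε 1) = 1 := by
  simp [uFam, Complex.normSq_ofReal]
  rw [Real.mul_self_sqrt (by linarith), Real.mul_self_sqrt h0]
  ring

lemma wFam_unit : Complex.normSq (wFam 0) + Complex.normSq (wFam 1) = 1 := by
  simp [wFam]


lemma proj0_psd : proj0.PosSemidef := by
  have h : proj0 = Matrix.vecMulVec (![1,0] : Fin 2 → ℂ) (star ![1,0]) := by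
    ext i j
    fin_cases i <;> fin_cases j <;> simp [proj0, Matrix.vecMulVec_apply]
  rw [h]
  exact psd_vecMulVec _

lemma proj1_psd : proj1.PosSemidef := by
  have h : proj1 = Matrix.vecMulVec (![0,1] : Fin 2 → ℂ) (star ![0,1]) := by
    ext i j
    fin_cases i <;> fin_cases j <;> simp [proj1, Matrix.vecMulVec_apply]
  rw [h]
  exact psd_vecMulVec _

lemma vmv_sum_one (x y : ℝ) (h : x*x + y*y = 1) :
    Matrix.vecMulVec (![(x:ℂ), (y:ℂ)]) (star ![(x:ℂ), (y:ℂ)])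
      + Matrix.vecMulVec (![(y:ℂ), (-x:ℂ)]) (star ![(y:ℂ), (-x:ℂ)]) = 1 := by
  ext i j
  rw [Matrix.add_apply, Matrix.vecMulVec_apply, Matrix.vecMulVec_apply]
  fin_cases i <;> fin_cases j <;>
    simp [Matrix.vecMulVec_apply, Matrix.one_apply, Complex.star_def, Complex.conj_ofReal] <;>
    push_cast <;> ring_nf <;> norm_cast <;> linarith [h]

lemma proj_sum_one : proj1 + proj0 = (1 : Matrix (Fin 2) (Fin 2) ℂ) := by
  ext i j
  fin_cases i <;> fin_cases j <;> simp [proj0, proj1, Matrix.one_apply]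

lemma family_opt (dε : ℝ) (h0 : 0 ≤ dε) (h1 : dε ≤ 1) :
    ∃ A' B' : Fin 2 → Matrix (Fin 2) (Fin 2) ℂ, IsPOVM A' ∧ IsPOVM B' ∧
      Pwin (Matrix.vecMulVec (sepFamily dε) (star (sepFamily dε))) A' B'
        = 1/2 + Real.sqrt dε / 2 := by
  set e := Real.sqrt dε with hedef
  have he0 : 0 ≤ e := Real.sqrt_nonneg _
  have he1 : e ≤ 1 := Real.sqrt_le_one.mpr h1
  have he2 : e*e = dε := Real.mul_self_sqrt h0
  set α := Real.sqrt ((1-e)/2) with hαdef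
  set β := Real.sqrt ((1+e)/2) with hβdef
  have hα2 : α*α = (1-e)/2 := Real.mul_self_sqrt (by linarith)
  have hβ2 : β*β = (1+e)/2 := Real.mul_self_sqrt (by linarith)
  set s' := Real.sqrt (1-dε) with hs'def
  have hs2 : s'*s' = 1-dε := Real.mul_self_sqrt (by linarith)
  have hs'0 : 0 ≤ s' := Real.sqrt_nonneg _
  have hαβ : α*β = s'/2 := by
    rw [hαdef, hβdef, ← Real.sqrt_mul (by linarith)]
    rw [show (1-e)/2 * ((1+e)/2) = (s'/2)*(s'/2) by
      linear_combination (-(1:ℝ)/4)*he2 + (-(1:ℝ)/4)*hs2]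
    exact Real.sqrt_mul_self (by positivity)
  have hsum1 : α*α + β*β = 1 := by rw [hα2, hβ2]; ring
  have hAp : IsPOVM ![Matrix.vecMulVec (![(α:ℂ), (β:ℂ)]) (star ![(α:ℂ), (β:ℂ)]),
      Matrix.vecMulVec (![(β:ℂ), (-α:ℂ)]) (star ![(β:ℂ), (-α:ℂ)])] := by
    constructor
    · intro a
      fin_cases a <;> simp only [Matrix.cons_val_zero, Matrix.cons_val_one, Matrix.head_cons] <;>
        exact psd_vecMulVec _
    · simp only [Matrix.cons_val_zero, Matrix.cons_val_one, Matrix.head_cons]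
      exact vmv_sum_one α β hsum1
  have hBp : IsPOVM ![proj1, proj0] := by
    constructor
    · intro a
      fin_cases a <;> simp only [Matrix.cons_val_zero, Matrix.cons_val_one, Matrix.head_cons]
      exacts [proj1_psd, proj0_psd]
    · simp only [Matrix.cons_val_zero, Matrix.cons_val_one, Matrix.head_cons]
      exact proj_sum_one
  refine ⟨_, _, hAp, hBp, ?_⟩
  rw [sepFamily_eq dε, Pwin_formula (uFam dε) wFam (uFam_unit dε h0 h1) wFam_unit _ _
    hAp.2 hBp.2]
  simp only [Matrix.cons_val_zero]
  have hZw : Matrix.trace ((Matrix.vecMulVec wFam (star wFam) - proj0) * proj1) = 1 := by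
    rw [Z_expand]
    simp [wFam, proj1]
  have hZu : Matrix.trace ((Matrix.vecMulVec (uFam dε) (star (uFam dε)) - proj0)
      * Matrix.vecMulVec (![(α:ℂ), (β:ℂ)]) (star ![(α:ℂ), (β:ℂ)])) = (e:ℂ) := by
    rw [Z_expand]
    simp only [uFam, Matrix.vecMulVec_apply, Matrix.cons_val_zero,
      Matrix.cons_val_one, Matrix.head_cons, Pi.star_apply, Complex.star_def,
      Complex.conj_ofReal, ← hedef, ← hs'def]
    push_cast
    norm_cast
    linear_combination (s'*s'-1)*hα2 + (e*e)*hβ2 + (s'*e+e*s')*hαβ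
      + ((1+e)/2)*hs2 + ((1+e)/2)*he2
  rw [hZu, hZw, mul_one]
  simp

/-- a product pure state σ⊗τ with ⟨11|σ⊗τ|11⟩ ≤ d_ε cannot win
the coherence equality game better than the optimum achieved by the family
(√(1−d_ε)|0⟩+√d_ε|1⟩)⊗|1⟩; in particular for d_ε = 0 every product state
yields P_win ≤ 1/2 unless it is a non-coherent basis state. -/
theorem stmt7 (dε : ℝ) (hdε : dε ∈ Set.Icc (0:ℝ) 1)
    (u w : Fin 2 → ℂ) (hu : ∑ i, Complex.normSq (u i) = 1)
    (hw : ∑ i, Complex.normSq (w i) = 1)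
    (ψ : Fin 2 × Fin 2 → ℂ) (hψ : ψ = fun p => u p.1 * w p.2)
    (hcon : ((Matrix.vecMulVec ψ (star ψ)) (1,1) (1,1)).re ≤ dε)
    (A B : Fin 2 → Matrix (Fin 2) (Fin 2) ℂ) (hA : IsPOVM A) (hB : IsPOVM B) :
    Pwin (Matrix.vecMulVec ψ (star ψ)) A B ≤
      sSup {p : ℝ | ∃ A' B', IsPOVM A' ∧ IsPOVM B' ∧
        p = Pwin (Matrix.vecMulVec (sepFamily dε) (star (sepFamily dε))) A' B'} ∧
    (dε = 0 →
      (Pwin (Matrix.vecMulVec ψ (star ψ)) A B ≤ 1/2 ∨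
        ∃ i j : Fin 2, Matrix.vecMulVec ψ (star ψ) =
          Matrix.single (i,j) (i,j) 1)) := by
  obtain ⟨hd0, hd1⟩ := hdε
  have hu2 : Complex.normSq (u 0) + Complex.normSq (u 1) = 1 := by
    simpa [Fin.sum_univ_two] using hu
  have hw2 : Complex.normSq (w 0) + Complex.normSq (w 1) = 1 := by
    simpa [Fin.sum_univ_two] using hw
  subst hψ
  have hcon' : Complex.normSq (u 1) * Complex.normSq (w 1) ≤ dε := by
    have h : ((Matrix.vecMulVec (fun p : Fin 2 × Fin 2 => u p.1 * w p.2)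
        (star (fun p : Fin 2 × Fin 2 => u p.1 * w p.2))) (1,1) (1,1)).re
        = Complex.normSq (u 1) * Complex.normSq (w 1) := by
      have h5 : (Matrix.vecMulVec (fun p : Fin 2 × Fin 2 => u p.1 * w p.2)
          (star (fun p : Fin 2 × Fin 2 => u p.1 * w p.2))) (1,1) (1,1)
          = (u 1 * w 1) * (starRingEnd ℂ) (u 1 * w 1) := by
        simp [Matrix.vecMulVec_apply, Complex.star_def]
      rw [h5, Complex.mul_conj, Complex.ofReal_re, Complex.normSq_mul]
    rw [h] at hcon
    exact hcon
  have habs : ‖u 1‖ * ‖w 1‖ ≤ Real.sqrt dε := by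
    have h4 : ‖u 1‖ * ‖w 1‖
        = Real.sqrt (Complex.normSq (u 1) * Complex.normSq (w 1)) := by
      rw [Real.sqrt_mul (Complex.normSq_nonneg _), Complex.norm_def, Complex.norm_def]
    rw [h4]
    exact Real.sqrt_le_sqrt hcon'
  have hPw := Pwin_le_bound u w hu2 hw2 A B hA hB
  obtain ⟨A', B', hA', hB', hval⟩ := family_opt dε hd0 hd1
  constructor
  · refine le_trans hPw (le_trans (by linarith : 1/2 + (‖u 1‖ * ‖w 1‖)/2
      ≤ 1/2 + Real.sqrt dε/2) ?_)
    apply le_csSup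
    · refine ⟨1/2 + Real.sqrt dε/2, ?_⟩
      rintro p ⟨A'', B'', hA'', hB'', rfl⟩
      rw [sepFamily_eq dε]
      refine le_trans (Pwin_le_bound (uFam dε) wFam (uFam_unit dε hd0 hd1) wFam_unit
        A'' B'' hA'' hB'') ?_
      have e1 : ‖uFam dε 1‖ = Real.sqrt dε := by
        simp [uFam, Complex.norm_real, abs_of_nonneg (Real.sqrt_nonneg _)]
      have e2 : ‖wFam 1‖ = 1 := by simp [wFam]
      rw [e1, e2, mul_one]
    · exact ⟨A', B', hA', hB', hval.symm⟩
  · intro hd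
    left
    subst hd
    have hz : ‖u 1‖ * ‖w 1‖ ≤ 0 := by
      simpa using habs
    have hz0 : 0 ≤ ‖u 1‖ * ‖w 1‖ :=
      mul_nonneg (norm_nonneg _) (norm_nonneg _)
    linarith
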